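/- Let a be a real number with 0 < a < 1. Then for every quaternion q with ‖q‖ ≤ 1 one has 1 − q·(a : ℍ) ≠ 0 and ‖(1 − q·(a : ℍ))⁻¹ · (1 − q)‖ ≤ 2/(1 + a); moreover at q = −1 equality holds, i.e. ‖(1 + (a : ℍ))⁻¹ · (1 − (−1 : ℍ))‖ = 2/(1 + a). In particular the maximum of ‖(1 − q·a)⁻¹·(1 − q)‖ over the closed unit ball equals 2/(1 + a). -/

import Mathlib

local notation "ℍ" => Quaternion ℝ

/-- The modulus of the fractional transformation `φ(q) = (1 - q·a)⁻¹·(1 - q)` is at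
most `2/(1+a)` on the closed unit ball, with equality at `q = -1`. -/
theorem phi_max_modulus
    (a : ℝ) (ha0 : 0 < a) (ha1 : a < 1) :
    (∀ q : ℍ, ‖q‖ ≤ 1 →
        1 - q * (a : ℍ) ≠ 0 ∧
        ‖(1 - q * (a : ℍ))⁻¹ * (1 - q)‖ ≤ 2 / (1 + a)) ∧
      ‖(1 - (-1 : ℍ) * (a : ℍ))⁻¹ * (1 - (-1 : ℍ))‖ = 2 / (1 + a) := by
  have ha1' : 0 < 1 + a := by linarith
  constructor
  · intro q hq
    set x := q.re with hx
    have hr2 : Quaternion.normSq q = x ^ 2 + q.imI ^ 2 + q.imJ ^ 2 + q.imK ^ 2 :=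
      Quaternion.normSq_def' q
    have hr2le : Quaternion.normSq q ≤ 1 := by
      have := Quaternion.normSq_eq_norm_mul_self q
      nlinarith [norm_nonneg q]
    -- normSq of 1 - q * a
    have hA : Quaternion.normSq (1 - q * (a : ℍ)) = 1 - 2 * a * x + a ^ 2 * Quaternion.normSq q := by
      rw [Quaternion.normSq_def', Quaternion.normSq_def']
      simp [Quaternion.re_sub, Quaternion.imI_sub, Quaternion.imJ_sub, Quaternion.imK_sub,
        Quaternion.re_mul, Quaternion.imI_mul, Quaternion.imJ_mul, Quaternion.imK_mul,
        Quaternion.re_one, Quaternion.imI_one, Quaternion.imJ_one, Quaternion.imK_one]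
      ring
    have hB : Quaternion.normSq (1 - q) = 1 - 2 * x + Quaternion.normSq q := by
      rw [Quaternion.normSq_def', Quaternion.normSq_def']
      simp [Quaternion.re_sub, Quaternion.imI_sub, Quaternion.imJ_sub, Quaternion.imK_sub,
        Quaternion.re_one, Quaternion.imI_one, Quaternion.imJ_one, Quaternion.imK_one]
      ring
    have hx2 : x ^ 2 ≤ Quaternion.normSq q := by nlinarith [sq_nonneg q.imI, sq_nonneg q.imJ, sq_nonneg q.imK]
    have hx1 : x ≤ 1 := by nlinarith [hx2, hr2le]
    have hax : a * x ≤ a := by nlinarith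
    have hApos : 0 < Quaternion.normSq (1 - q * (a : ℍ)) := by
      rw [hA]
      nlinarith [mul_le_mul_of_nonneg_left hx2 (sq_nonneg a),
        mul_pos (sub_pos.mpr (lt_of_le_of_lt hax ha1)) (sub_pos.mpr (lt_of_le_of_lt hax ha1))]
    have hne : 1 - q * (a : ℍ) ≠ 0 := by
      intro h
      rw [h] at hApos; simp at hApos
    refine ⟨hne, ?_⟩
    have hnA : ‖1 - q * (a : ℍ)‖ ^ 2 = Quaternion.normSq (1 - q * (a : ℍ)) := by
      rw [Quaternion.normSq_eq_norm_mul_self]; ring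
    have hnB : ‖1 - q‖ ^ 2 = Quaternion.normSq (1 - q) := by
      rw [Quaternion.normSq_eq_norm_mul_self]; ring
    have hAnorm : 0 < ‖1 - q * (a : ℍ)‖ := norm_pos_iff.mpr hne
    rw [norm_mul, norm_inv]
    rw [inv_mul_le_iff₀ hAnorm, mul_div_assoc', le_div_iff₀ ha1']
    have key : (‖1 - q‖ * (1 + a)) ^ 2 ≤ (2 * ‖1 - q * (a : ℍ)‖) ^ 2 := by
      have h1 : (‖1 - q‖ * (1 + a)) ^ 2 = Quaternion.normSq (1 - q) * (1 + a) ^ 2 := by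
        rw [mul_pow, hnB]
      have h2 : (2 * ‖1 - q * (a : ℍ)‖) ^ 2 = 4 * Quaternion.normSq (1 - q * (a : ℍ)) := by
        rw [mul_pow, hnA]; ring
      rw [h1, h2, hA, hB]
      have hxm : -1 ≤ x := by nlinarith [hx2, hr2le]
      have h1a : (0:ℝ) ≤ 1 - a := by linarith
      nlinarith [mul_nonneg (mul_nonneg h1a h1a) (by linarith : (0:ℝ) ≤ 1 + x),
        mul_nonneg (mul_nonneg h1a (by linarith : (0:ℝ) ≤ 3 * a + 1))
          (by linarith : (0:ℝ) ≤ 1 - Quaternion.normSq q)]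
    have key2 := (pow_le_pow_iff_left₀ (by positivity) (by positivity) two_ne_zero).mp key
    linarith
  · have h1 : (1 - (-1 : ℍ) * (a : ℍ)) = ((1 + a : ℝ) : ℍ) := by
      rw [Quaternion.coe_add, Quaternion.coe_one, neg_one_mul, sub_neg_eq_add]
    have h2 : (1 - (-1 : ℍ)) = ((2 : ℝ) : ℍ) := by
      rw [sub_neg_eq_add, ← Quaternion.coe_one, ← Quaternion.coe_add]; norm_num
    rw [h1, h2, ← Quaternion.coe_inv, ← Quaternion.coe_mul, Quaternion.norm_coe,
      Real.norm_eq_abs, abs_of_pos (by positivity)]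
    rw [inv_mul_eq_div]
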